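/- The coin system (1, 2, 5, 10, 20, 50, 100, 200) is orderly. -/

import Mathlib

/-- The largest coin value in `C` that is at most `v` (or 0 if none). -/
def coinMax (C : List ℕ) (v : ℕ) : ℕ := (C.filter (· ≤ v)).foldr max 0

/-- Fuelled greedy coin count. -/
def grdAux (C : List ℕ) : ℕ → ℕ → ℕ
  | 0, _ => 0
  | fuel + 1, v =>
    let c := coinMax C v
    if v = 0 ∨ c = 0 then 0 else 1 + grdAux C fuel (v - c)

/-- Number of coins used by the greedy algorithm to represent `v` with coin system `C`. -/
def grd (C : List ℕ) (v : ℕ) : ℕ := grdAux C v v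

/-- The set of sizes of representations of `v` as nonnegative integer combinations of
the coin values in `C`. -/
def reprCosts (C : List ℕ) (v : ℕ) : Set ℕ :=
  {k | ∃ x : List ℕ, x.length = C.length ∧ (List.zipWith (· * ·) x C).sum = v ∧ x.sum = k}

/-- Minimum number of coins needed to represent `v` with coin system `C`. -/
noncomputable def opt (C : List ℕ) (v : ℕ) : ℕ := sInf (reprCosts C v)

/-- A coin system is orderly if greedy is optimal for every positive value. -/
def Orderly (C : List ℕ) : Prop := ∀ v : ℕ, 0 < v → grd C v = opt C v



lemma le_foldr_max {a : ℕ} {l : List ℕ} (h : a ∈ l) : a ≤ l.foldr max 0 := by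
  induction l with
  | nil => simp at h
  | cons b t ih =>
    rcases List.mem_cons.mp h with h | h
    · subst h; simp [List.foldr_cons]
    · have := ih h
      simp only [List.foldr_cons, le_max_iff]; right; exact this

lemma foldr_max_le {b : ℕ} {l : List ℕ} (h : ∀ a ∈ l, a ≤ b) : l.foldr max 0 ≤ b := by
  induction l with
  | nil => simp
  | cons c t ih =>
    simp only [List.foldr_cons, max_le_iff]
    exact ⟨h c (by simp), ih fun a ha => h a (by simp [ha])⟩

lemma foldr_max_mem (l : List ℕ) : l.foldr max 0 = 0 ∨ l.foldr max 0 ∈ l := by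
  induction l with
  | nil => simp
  | cons c t ih =>
    simp only [List.foldr_cons]
    rcases le_or_gt (t.foldr max 0) c with h | h
    · right; rw [max_eq_left h]; exact List.mem_cons_self
    · rcases ih with h0 | hm
      · omega
      · right; rw [max_eq_right h.le]; exact List.mem_cons_of_mem _ hm

abbrev Csys : List ℕ := [1, 2, 5, 10, 20, 50, 100, 200]

lemma coinMax_le (v : ℕ) : coinMax Csys v ≤ v := by
  apply foldr_max_le; intro a ha
  simp only [List.mem_filter, decide_eq_true_eq] at ha; exact ha.2

lemma coinMax_pos {v : ℕ} (hv : 0 < v) : 0 < coinMax Csys v := by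
  have h1 : (1 : ℕ) ∈ Csys.filter (· ≤ v) := by
    simp [List.mem_filter]; omega
  have h2 := le_foldr_max h1
  unfold coinMax; omega

lemma coinMax_mem {v : ℕ} (hv : 0 < v) : coinMax Csys v ∈ Csys := by
  have hpos := coinMax_pos hv
  rcases foldr_max_mem (Csys.filter (· ≤ v)) with h | h
  · unfold coinMax at hpos; omega
  · exact (List.mem_filter.mp h).1

lemma coinMax_200 {v : ℕ} (hv : 200 ≤ v) : coinMax Csys v = 200 := by
  have h1 : (200 : ℕ) ∈ Csys.filter (· ≤ v) := by simp [List.mem_filter]; omega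
  have h2 := le_foldr_max h1
  have h3 : coinMax Csys v ≤ 200 := by
    apply foldr_max_le; intro a ha
    have := (List.mem_filter.mp ha).1
    fin_cases this <;> omega
  unfold coinMax at *; omega

lemma grdAux_fuel : ∀ v f f', v ≤ f → v ≤ f' → grdAux Csys f v = grdAux Csys f' v := by
  intro v
  induction v using Nat.strong_induction_on with
  | _ v ih =>
    intro f f' hf hf'
    match f, f' with
    | 0, 0 => rfl
    | 0, f' + 1 =>
      have : v = 0 := by omega
      subst this; simp [grdAux]
    | f + 1, 0 =>
      have : v = 0 := by omega
      subst this; simp [grdAux]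
    | f + 1, f' + 1 =>
      rcases Nat.eq_zero_or_pos v with rfl | hv
      · simp [grdAux]
      · have hc := coinMax_pos hv
        have hcle := coinMax_le v
        simp only [grdAux]
        rw [if_neg (by omega), if_neg (by omega)]
        rw [ih (v - coinMax Csys v) (by omega) f f' (by omega) (by omega)]

lemma grd_step {v : ℕ} (hv : 0 < v) :
    grd Csys v = 1 + grd Csys (v - coinMax Csys v) := by
  have hc := coinMax_pos hv
  have hcle := coinMax_le v
  unfold grd
  obtain ⟨w, rfl⟩ : ∃ w, v = w + 1 := ⟨v - 1, by omega⟩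
  simp only [grdAux]
  rw [if_neg (by omega)]
  rw [grdAux_fuel (w + 1 - coinMax Csys (w+1)) w (w + 1 - coinMax Csys (w+1)) (by omega) (by omega)]

lemma grd_200 {v : ℕ} (hv : 200 ≤ v) : grd Csys v = 1 + grd Csys (v - 200) := by
  rw [grd_step (by omega), coinMax_200 hv]

set_option maxRecDepth 100000 in
set_option maxHeartbeats 4000000 in
lemma key_small : ∀ v < 400, ∀ c ∈ Csys, c ≤ v → grd Csys v ≤ 1 + grd Csys (v - c) := by decide


lemma key : ∀ v, ∀ c ∈ Csys, c ≤ v → grd Csys v ≤ 1 + grd Csys (v - c) := by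
  intro v
  induction v using Nat.strong_induction_on with
  | _ v ih =>
    intro c hc hcv
    rcases lt_or_ge v 400 with h | h
    · exact key_small v h c hc hcv
    · have hc200 : c ≤ 200 := by fin_cases hc <;> omega
      rw [grd_200 (by omega), grd_200 (show 200 ≤ v - c by omega)]
      have : v - c - 200 = (v - 200) - c := by omega
      rw [this]
      have := ih (v - 200) (by omega) c hc (by omega)
      omega

lemma reprCosts_iff {v k : ℕ} : k ∈ reprCosts Csys v ↔
    ∃ a b c d e f g h : ℕ,
      a + 2*b + 5*c + 10*d + 20*e + 50*f + 100*g + 200*h = v ∧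
      a + b + c + d + e + f + g + h = k := by
  constructor
  · rintro ⟨x, hlen, hsum, hk⟩
    simp only [Csys, List.length_cons, List.length_nil] at hlen
    obtain ⟨a, b, c, d, e, f, g, h, rfl⟩ :
        ∃ a b c d e f g h, x = [a, b, c, d, e, f, g, h] := by
      rcases x with _ | ⟨a, _ | ⟨b, _ | ⟨c, _ | ⟨d, _ | ⟨e, _ | ⟨f, _ | ⟨g, _ | ⟨h, _ | ⟨i, t⟩⟩⟩⟩⟩⟩⟩⟩⟩ <;>
        first
        | exact ⟨a, b, c, d, e, f, g, h, rfl⟩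
        | (exfalso; simp at hlen)
        | (exfalso; simp at hlen; omega)
    simp only [Csys, List.zipWith, List.sum_cons, List.sum_nil] at hsum hk
    exact ⟨a, b, c, d, e, f, g, h, by omega, by omega⟩
  · rintro ⟨a, b, c, d, e, f, g, h, h1, h2⟩
    exact ⟨[a, b, c, d, e, f, g, h], by simp, by simp; omega, by simp; omega⟩

lemma grd_zero : grd Csys 0 = 0 := rfl

lemma grd_mem : ∀ v, grd Csys v ∈ reprCosts Csys v := by
  intro v
  induction v using Nat.strong_induction_on with
  | _ v ih =>
    rcases Nat.eq_zero_or_pos v with rfl | hv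
    · rw [grd_zero]
      exact reprCosts_iff.mpr ⟨0,0,0,0,0,0,0,0, by omega, by omega⟩
    · have hcle := coinMax_le v
      have hcpos := coinMax_pos hv
      have hmem := coinMax_mem hv
      rw [grd_step hv]
      obtain ⟨a,b,c,d,e,f,g,h,h1,h2⟩ := reprCosts_iff.mp (ih (v - coinMax Csys v) (by omega))
      have hd : coinMax Csys v = 1 ∨ coinMax Csys v = 2 ∨ coinMax Csys v = 5 ∨
          coinMax Csys v = 10 ∨ coinMax Csys v = 20 ∨ coinMax Csys v = 50 ∨
          coinMax Csys v = 100 ∨ coinMax Csys v = 200 := by simpa [Csys] using hmem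
      rcases hd with hcm|hcm|hcm|hcm|hcm|hcm|hcm|hcm <;> rw [hcm] at h1 h2 ⊢
      · exact reprCosts_iff.mpr ⟨a+1,b,c,d,e,f,g,h, by omega, by omega⟩
      · exact reprCosts_iff.mpr ⟨a,b+1,c,d,e,f,g,h, by omega, by omega⟩
      · exact reprCosts_iff.mpr ⟨a,b,c+1,d,e,f,g,h, by omega, by omega⟩
      · exact reprCosts_iff.mpr ⟨a,b,c,d+1,e,f,g,h, by omega, by omega⟩
      · exact reprCosts_iff.mpr ⟨a,b,c,d,e+1,f,g,h, by omega, by omega⟩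
      · exact reprCosts_iff.mpr ⟨a,b,c,d,e,f+1,g,h, by omega, by omega⟩
      · exact reprCosts_iff.mpr ⟨a,b,c,d,e,f,g+1,h, by omega, by omega⟩
      · exact reprCosts_iff.mpr ⟨a,b,c,d,e,f,g,h+1, by omega, by omega⟩

lemma grd_le : ∀ v k, k ∈ reprCosts Csys v → grd Csys v ≤ k := by
  intro v
  induction v using Nat.strong_induction_on with
  | _ v ih =>
    intro k hk
    rcases Nat.eq_zero_or_pos v with rfl | hv
    · rw [grd_zero]; omega
    · obtain ⟨a,b,c,d,e,f,g,h,h1,h2⟩ := reprCosts_iff.mp hk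
      suffices hs : ∃ c' ∈ Csys, c' ≤ v ∧ (k - 1) ∈ reprCosts Csys (v - c') ∧ 1 ≤ k by
        obtain ⟨c', hc'mem, hc'le, hrep, hk1⟩ := hs
        have := key v c' hc'mem hc'le
        have hc0 : 0 < c' := by fin_cases hc'mem <;> omega
        have := ih (v - c') (by omega) _ hrep
        omega
      have hpos : 0 < a ∨ 0 < b ∨ 0 < c ∨ 0 < d ∨ 0 < e ∨ 0 < f ∨ 0 < g ∨ 0 < h := by omega
      rcases hpos with p|p|p|p|p|p|p|p
      · exact ⟨1, by simp, by omega, reprCosts_iff.mpr ⟨a-1,b,c,d,e,f,g,h, by omega, by omega⟩, by omega⟩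
      · exact ⟨2, by simp, by omega, reprCosts_iff.mpr ⟨a,b-1,c,d,e,f,g,h, by omega, by omega⟩, by omega⟩
      · exact ⟨5, by simp, by omega, reprCosts_iff.mpr ⟨a,b,c-1,d,e,f,g,h, by omega, by omega⟩, by omega⟩
      · exact ⟨10, by simp, by omega, reprCosts_iff.mpr ⟨a,b,c,d-1,e,f,g,h, by omega, by omega⟩, by omega⟩
      · exact ⟨20, by simp, by omega, reprCosts_iff.mpr ⟨a,b,c,d,e-1,f,g,h, by omega, by omega⟩, by omega⟩
      · exact ⟨50, by simp, by omega, reprCosts_iff.mpr ⟨a,b,c,d,e,f-1,g,h, by omega, by omega⟩, by omega⟩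
      · exact ⟨100, by simp, by omega, reprCosts_iff.mpr ⟨a,b,c,d,e,f,g-1,h, by omega, by omega⟩, by omega⟩
      · exact ⟨200, by simp, by omega, reprCosts_iff.mpr ⟨a,b,c,d,e,f,g,h-1, by omega, by omega⟩, by omega⟩

theorem stmt_3 : Orderly [1, 2, 5, 10, 20, 50, 100, 200] := by
  intro v hv
  have hmem := grd_mem v
  apply le_antisymm
  · exact le_csInf ⟨_, hmem⟩ (fun b hb => grd_le v b hb)
  · exact Nat.sInf_le hmem
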